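/- arXiv:1907.13625 — 3 statements merged into one kernel-verified Lean document; each statement's English description precedes it below -/
import Mathlib

section
/- (NWJ/Donsker–Varadhan-type lower bound) For any probability measures P and Q on a finite set and any function f, D_KL(P‖Q) ≥ E_P[f] − e^{−1} E_Q[e^f]. -/
open BigOperators

/-- Kullback–Leibler divergence between two pmfs on a finite set. -/
noncomputable def klDivFin {S : Type*} [Fintype S] (P Q : S → ℝ) : ℝ :=
  ∑ x, P x * Real.log (P x / Q x)

lemma nwj_pointwise (p q t : ℝ) (hp : 0 ≤ p) (hq : 0 ≤ q)
    (h : p ≠ 0 → 0 < q) :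
    p * t - Real.exp (-1) * (q * Real.exp t) ≤ p * Real.log (p / q) := by
  rcases eq_or_lt_of_le hp with h0 | hp
  · rw [← h0]
    simp only [zero_mul, zero_sub, neg_nonpos]
    positivity
  · have hq' := h hp.ne'
    have hpq : 0 < p / q := div_pos hp hq'
    obtain ⟨u, hu⟩ : ∃ u, u = t - Real.log (p / q) := ⟨_, rfl⟩
    have ht : t = Real.log (p / q) + u := by rw [hu]; ring
    have he : Real.exp t = (p / q) * Real.exp u := by
      rw [ht, Real.exp_add, Real.exp_log hpq]
    have hqe : Real.exp (-1) * (q * Real.exp t) = p * Real.exp (u - 1) := by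
      rw [he, show u - 1 = -1 + u by ring, Real.exp_add]
      field_simp
    have key : u ≤ Real.exp (u - 1) := by
      have := Real.add_one_le_exp (u - 1); linarith
    have h2 : p * u ≤ p * Real.exp (u - 1) :=
      mul_le_mul_of_nonneg_left key hp.le
    have hut : p * u = p * t - p * Real.log (p / q) := by rw [hu]; ring
    rw [hqe]
    linarith

/-- NWJ (Nguyen–Wainwright–Jordan) variational lower bound on the KL
divergence: for any `f`, `D_KL(P‖Q) ≥ E_P[f] − e⁻¹ E_Q[e^f]`. -/
theorem nwj_lower_bound {S : Type*} [Fintype S] (P Q : S → ℝ)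
    (hP0 : ∀ x, 0 ≤ P x) (hP1 : ∑ x, P x = 1)
    (hQ0 : ∀ x, 0 ≤ Q x) (hQ1 : ∑ x, Q x = 1)
    (hac : ∀ x, P x ≠ 0 → 0 < Q x) (f : S → ℝ) :
    ∑ x, P x * f x - Real.exp (-1) * ∑ x, Q x * Real.exp (f x) ≤
      klDivFin P Q := by
  rw [klDivFin, Finset.mul_sum, ← Finset.sum_sub_distrib]
  exact Finset.sum_le_sum fun x _ =>
    nwj_pointwise (P x) (Q x) (f x) (hP0 x) (hQ0 x) (hac x)
end

section
/- The function f*(x) = 1 + log(dP/dQ)(x) achieves equality in the NWJ bound: E_P[f*] − e^{−1} E_Q[e^{f*}] = D_KL(P‖Q). -/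
open BigOperators

/-- The critic `f*(x) = 1 + log(dP/dQ)(x)` achieves equality in the NWJ bound:
`E_P[f*] − e⁻¹ E_Q[e^{f*}] = D_KL(P‖Q)`. -/
theorem nwj_optimal_critic_equality {S : Type*} [Fintype S] (P Q : S → ℝ)
    (hP0 : ∀ x, 0 ≤ P x) (hP1 : ∑ x, P x = 1)
    (hQ0 : ∀ x, 0 ≤ Q x) (hQ1 : ∑ x, Q x = 1)
    (hac : ∀ x, P x ≠ 0 → 0 < Q x)
    (hpos : ∀ x, Q x ≠ 0 → 0 < P x / Q x) :
    ∑ x, P x * (1 + Real.log (P x / Q x)) -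
        Real.exp (-1) * ∑ x, Q x * Real.exp (1 + Real.log (P x / Q x)) =
      klDivFin P Q := by
  have hterm : ∀ x, Q x * Real.exp (1 + Real.log (P x / Q x)) = Real.exp 1 * P x := by
    intro x
    by_cases hQ : Q x = 0
    · have hP : P x = 0 := by
        by_contra h
        exact absurd hQ (ne_of_gt (hac x h))
      simp [hQ, hP]
    · rw [Real.exp_add, Real.exp_log (hpos x hQ)]
      field_simp
  have hsum : ∑ x, Q x * Real.exp (1 + Real.log (P x / Q x)) = Real.exp 1 := by
    simp_rw [hterm, ← Finset.mul_sum, hP1, mul_one]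
  rw [hsum]
  have : Real.exp (-1) * Real.exp 1 = 1 := by
    rw [← Real.exp_add]; norm_num
  rw [this]
  simp_rw [mul_add, Finset.sum_add_distrib, mul_one, hP1, klDivFin]
  ring
end

section
/- (InfoNCE is a lower bound on MI under i.i.d. sampling) Let (X_i, Y_i)_{i=1}^K be i.i.d. draws from a joint distribution p(x,y) over finite sets. Then for any critic function f, I(X;Y) ≥ E[ (1/K) Σ_{i=1}^K log( e^{f(x_i,y_i)} / ((1/K) Σ_{j=1}^K e^{f(x_j,y_i)}) ) ]. -/
open BigOperators

/-- Marginal on the first coordinate of a joint pmf. -/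
noncomputable def fstMarginal {α β : Type*} [Fintype β] (p : α × β → ℝ) (a : α) : ℝ :=
  ∑ b, p (a, b)

/-- Marginal on the second coordinate of a joint pmf. -/
noncomputable def sndMarginal {α β : Type*} [Fintype α] (p : α × β → ℝ) (b : β) : ℝ :=
  ∑ a, p (a, b)

/-- Mutual information of a joint pmf on a finite product space. -/
noncomputable def mutualInfoP {α β : Type*} [Fintype α] [Fintype β]
    (p : α × β → ℝ) : ℝ :=
  ∑ a, ∑ b, p (a, b) * Real.log (p (a, b) / (fstMarginal p a * sndMarginal p b))

lemma sum_pi_prod {γ : Type*} [Fintype γ] {K : ℕ} (h : Fin K → γ → ℝ) :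
    ∑ s : Fin K → γ, ∏ j, h j (s j) = ∏ j, ∑ z, h j z :=
  (Fintype.prod_sum h).symm

lemma sum_pi_extract {γ : Type*} [Fintype γ] {K : ℕ} (i : Fin K)
    (h : Fin K → γ → ℝ) (v : γ → ℝ) :
    ∑ s : Fin K → γ, (∏ j, h j (s j)) * v (s i) =
      (∑ z, h i z * v z) * ∏ j ∈ Finset.univ.erase i, ∑ z, h j z := by
  have key : ∀ s : Fin K → γ, (∏ j, h j (s j)) * v (s i)
      = ∏ j, (h j (s j) * (if j = i then v (s j) else 1)) := by
    intro s
    rw [Finset.prod_mul_distrib, Finset.prod_ite_eq' Finset.univ i (fun j => v (s j))]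
    simp
  simp_rw [key]
  rw [sum_pi_prod (fun j z => h j z * (if j = i then v z else 1)),
    ← Finset.mul_prod_erase Finset.univ _ (Finset.mem_univ i)]
  simp only [if_pos rfl]
  congr 1
  apply Finset.prod_congr rfl
  intro j hj
  have hji : j ≠ i := (Finset.mem_erase.mp hj).1
  simp [hji]

/-- InfoNCE is a lower bound on MI under i.i.d. sampling: for `(Xᵢ, Yᵢ)` i.i.d.
from `p(x,y)` and any critic `f`,
`I(X;Y) ≥ E[(1/K) Σ_i log(e^{f(xᵢ,yᵢ)} / ((1/K) Σ_j e^{f(xⱼ,yᵢ)}))]`. -/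
theorem infoNCE_le_mutualInfo {α β : Type*} [Fintype α] [Fintype β]
    (p : α × β → ℝ) (hp0 : ∀ z, 0 ≤ p z) (hp1 : ∑ z, p z = 1)
    (K : ℕ) (hK : 1 ≤ K) (f : α → β → ℝ) :
    ∑ s : Fin K → α × β, (∏ i, p (s i)) *
        ((1 / (K : ℝ)) * ∑ i : Fin K,
          Real.log (Real.exp (f (s i).1 (s i).2) /
            ((1 / (K : ℝ)) * ∑ j : Fin K, Real.exp (f (s j).1 (s i).2)))) ≤
      mutualInfoP p := by
  classical
  have hKpos : (0:ℝ) < K := by exact_mod_cast hK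
  haveI : Nonempty (Fin K) := ⟨⟨0, hK⟩⟩
  set p1 : α → ℝ := fstMarginal p with hp1def
  set p2 : β → ℝ := sndMarginal p with hp2def
  have hp1nn : ∀ a, 0 ≤ p1 a := fun a => Finset.sum_nonneg fun b _ => hp0 _
  have hp2nn : ∀ b, 0 ≤ p2 b := fun b => Finset.sum_nonneg fun a _ => hp0 _
  have hple1 : ∀ z : α × β, p z ≤ p1 z.1 := by
    intro z
    have := Finset.single_le_sum (f := fun b => p (z.1, b))
      (fun b _ => hp0 _) (Finset.mem_univ z.2)
    simpa [hp1def, fstMarginal] using this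
  have hple2 : ∀ z : α × β, p z ≤ p2 z.2 := by
    intro z
    have := Finset.single_le_sum (f := fun a => p (a, z.2))
      (fun a _ => hp0 _) (Finset.mem_univ z.1)
    simpa [hp2def, sndMarginal] using this
  have hsum1 : ∑ a, p1 a = 1 := by
    rw [hp1def]; unfold fstMarginal; rw [← Fintype.sum_prod_type]; exact hp1
  have hsum2 : ∑ b, p2 b = 1 := by
    rw [hp2def]; unfold sndMarginal; rw [← Fintype.sum_prod_type_right]; exact hp1
  -- abbreviations
  set A : Fin K → (Fin K → α × β) → ℝ :=
    fun i s => (1 / (K:ℝ)) * ∑ j : Fin K, Real.exp (f (s j).1 (s i).2) with hAdef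
  have hApos : ∀ i s, 0 < A i s := by
    intro i s
    apply mul_pos (by positivity)
    exact Finset.sum_pos (fun j _ => Real.exp_pos _) Finset.univ_nonempty
  set L : Fin K → (Fin K → α × β) → ℝ :=
    fun i s => Real.log (Real.exp (f (s i).1 (s i).2) / A i s) with hLdef
  set P : (Fin K → α × β) → ℝ := fun s => ∏ j, p (s j) with hPdef
  have hPnn : ∀ s, 0 ≤ P s := fun s => Finset.prod_nonneg fun j _ => hp0 _
  have hPsum : ∑ s : Fin K → α × β, P s = 1 := by
    rw [hPdef, sum_pi_prod (fun _ z => p z)]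
    simp [hp1]
  set g : α × β → ℝ := fun z => Real.log (p z / (p1 z.1 * p2 z.2)) with hgdef
  set D : (Fin K → α) → β → ℝ :=
    fun x b => (1 / (K:ℝ)) * ∑ j : Fin K, Real.exp (f (x j) b) with hDdef
  have hDpos : ∀ x b, 0 < D x b := by
    intro x b
    apply mul_pos (by positivity)
    exact Finset.sum_pos (fun j _ => Real.exp_pos _) Finset.univ_nonempty
  set Q : Fin K → ℝ := fun i => ∑ x : Fin K → α,
    (∏ j, p1 (x j)) * ∑ b, p2 b * (Real.exp (f (x i) b) / D x b) with hQdef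
  -- Step: per-i bound
  have per_i : ∀ i : Fin K, ∑ s : Fin K → α × β, P s * L i s
      ≤ mutualInfoP p + (Q i - 1) := by
    intro i
    set r : (Fin K → α × β) → ℝ := fun s =>
      Real.exp (f (s i).1 (s i).2) * (p1 (s i).1 * p2 (s i).2) / (A i s * p (s i))
      with hrdef
    have pointwise : ∀ s, P s * L i s ≤ P s * (g (s i) + (r s - 1)) := by
      intro s
      rcases eq_or_lt_of_le (hPnn s) with h0 | hpos
      · rw [← h0]; simp
      · have hfac : ∀ j, 0 < p (s j) := by
          intro j
          rcases (hp0 (s j)).lt_or_eq with h | h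
          · exact h
          · exfalso
            have : P s = 0 := Finset.prod_eq_zero (Finset.mem_univ j) h.symm
            rw [this] at hpos; exact lt_irrefl _ hpos
        have hpz : 0 < p (s i) := hfac i
        have hq1 : 0 < p1 (s i).1 := lt_of_lt_of_le hpz (hple1 _)
        have hq2 : 0 < p2 (s i).2 := lt_of_lt_of_le hpz (hple2 _)
        have hA := hApos i s
        have hr : 0 < r s := by
          rw [hrdef]
          exact div_pos (mul_pos (Real.exp_pos _) (mul_pos hq1 hq2)) (mul_pos hA hpz)
        have harg : p (s i) / (p1 (s i).1 * p2 (s i).2) * r s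
            = Real.exp (f (s i).1 (s i).2) / A i s := by
          rw [hrdef]
          field_simp
        have hsplit : L i s = g (s i) + Real.log (r s) := by
          rw [hLdef]
          dsimp only
          rw [← harg, Real.log_mul (by positivity) hr.ne']
        have hle : Real.log (r s) ≤ r s - 1 := Real.log_le_sub_one_of_pos hr
        rw [hsplit]
        apply mul_le_mul_of_nonneg_left _ (hPnn s)
        linarith
    calc ∑ s : Fin K → α × β, P s * L i s
        ≤ ∑ s : Fin K → α × β, P s * (g (s i) + (r s - 1)) :=
          Finset.sum_le_sum fun s _ => pointwise s
      _ = (∑ s : Fin K → α × β, P s * g (s i))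
          + ((∑ s : Fin K → α × β, P s * r s) - ∑ s : Fin K → α × β, P s) := by
          simp only [mul_add, mul_sub, mul_one]
          rw [Finset.sum_add_distrib, Finset.sum_sub_distrib]
      _ ≤ mutualInfoP p + (Q i - 1) := by
          have hTermA : ∑ s : Fin K → α × β, P s * g (s i) = mutualInfoP p := by
            rw [hPdef]
            rw [sum_pi_extract i (fun _ z => p z) g]
            simp only [hp1]
            rw [Finset.prod_const_one, mul_one]
            rw [mutualInfoP, Fintype.sum_prod_type (f := fun z => p z * g z)]
          have hTermB : ∑ s : Fin K → α × β, P s * r s ≤ Q i := by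
            -- weight with i-th coordinate replaced by product marginal
            set w : Fin K → α × β → ℝ :=
              fun j z => if j = i then p1 z.1 * p2 z.2 else p z with hwdef
            have hwnn : ∀ j z, 0 ≤ w j z := by
              intro j z; rw [hwdef]; dsimp only
              split
              · exact mul_nonneg (hp1nn _) (hp2nn _)
              · exact hp0 _
            have hptw : ∀ s, P s * r s ≤
                (∏ j, w j (s j)) * (Real.exp (f (s i).1 (s i).2) / A i s) := by
              intro s
              rcases (hp0 (s i)).lt_or_eq with hpz | hpz
              · -- positive case: equality
                have hA := hApos i s
                have hsplitP : P s = p (s i) * ∏ j ∈ Finset.univ.erase i, p (s j) := by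
                  rw [hPdef]
                  exact (Finset.mul_prod_erase Finset.univ _ (Finset.mem_univ i)).symm
                have hsplitW : (∏ j, w j (s j)) =
                    (p1 (s i).1 * p2 (s i).2) * ∏ j ∈ Finset.univ.erase i, p (s j) := by
                  rw [← Finset.mul_prod_erase Finset.univ _ (Finset.mem_univ i)]
                  rw [hwdef]; dsimp only
                  rw [if_pos rfl]
                  congr 1
                  apply Finset.prod_congr rfl
                  intro j hj
                  rw [if_neg (Finset.mem_erase.mp hj).1]
                apply le_of_eq
                rw [hsplitP, hsplitW, hrdef]
                field_simp
              · -- p (s i) = 0 : LHS = 0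
                have : P s = 0 := Finset.prod_eq_zero (Finset.mem_univ i) hpz.symm
                rw [this, zero_mul]
                apply mul_nonneg (Finset.prod_nonneg fun j _ => hwnn j _)
                exact div_nonneg (Real.exp_pos _).le (hApos i s).le
            calc ∑ s : Fin K → α × β, P s * r s
                ≤ ∑ s : Fin K → α × β,
                    (∏ j, w j (s j)) * (Real.exp (f (s i).1 (s i).2) / A i s) :=
                  Finset.sum_le_sum fun s _ => hptw s
              _ = Q i := by
                  rw [← Equiv.sum_comp (Equiv.arrowProdEquivProdArrow (Fin K) (fun _ => α) (fun _ => β)).symm]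
                  rw [Fintype.sum_prod_type]
                  rw [hQdef]
                  apply Finset.sum_congr rfl
                  intro x _
                  have inner : ∑ t : Fin K → β,
                      (∏ j, w j (x j, t j)) *
                        (Real.exp (f (x i) (t i)) / D x (t i)) =
                      (∑ b, w i (x i, b) * (Real.exp (f (x i) b) / D x b)) *
                        ∏ j ∈ Finset.univ.erase i, ∑ b, w j (x j, b) := by
                    exact sum_pi_extract i (fun j b => w j (x j, b))
                      (fun b => Real.exp (f (x i) b) / D x b)
                  have e_eval : ∀ (t : Fin K → β),
                      ((Equiv.arrowProdEquivProdArrow (Fin K) (fun _ => α) (fun _ => β)).symm (x, t)) =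
                        fun j => (x j, t j) := fun t => rfl
                  calc ∑ t : Fin K → β,
                        (∏ j, w j ((Equiv.arrowProdEquivProdArrow (Fin K) (fun _ => α) (fun _ => β)).symm (x, t) j)) *
                          (Real.exp (f (((Equiv.arrowProdEquivProdArrow (Fin K) (fun _ => α) (fun _ => β)).symm (x, t)) i).1
                              (((Equiv.arrowProdEquivProdArrow (Fin K) (fun _ => α) (fun _ => β)).symm (x, t)) i).2) /
                            A i ((Equiv.arrowProdEquivProdArrow (Fin K) (fun _ => α) (fun _ => β)).symm (x, t)))
                      = ∑ t : Fin K → β,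
                        (∏ j, w j (x j, t j)) *
                          (Real.exp (f (x i) (t i)) / D x (t i)) := by
                        apply Finset.sum_congr rfl
                        intro t _
                        rw [e_eval t]
                    _ = (∏ j, p1 (x j)) *
                          ∑ b, p2 b * (Real.exp (f (x i) b) / D x b) := by
                        rw [inner]
                        have h1 : ∀ j ∈ Finset.univ.erase i,
                            (∑ b, w j (x j, b)) = p1 (x j) := by
                          intro j hj
                          rw [hwdef]; dsimp only
                          simp only [if_neg (Finset.mem_erase.mp hj).1]
                          rfl
                        rw [Finset.prod_congr rfl h1]
                        have h2 : (∑ b, w i (x i, b) * (Real.exp (f (x i) b) / D x b))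
                            = p1 (x i) * ∑ b, p2 b * (Real.exp (f (x i) b) / D x b) := by
                          rw [Finset.mul_sum]
                          apply Finset.sum_congr rfl
                          intro b _
                          rw [hwdef]; dsimp only
                          rw [if_pos rfl]
                          ring
                        rw [h2, ← Finset.mul_prod_erase Finset.univ _ (Finset.mem_univ i)]
                        ring
          rw [hTermA, hPsum]
          linarith
  -- sum over i
  have hQsum : ∑ i : Fin K, Q i = K := by
    rw [hQdef]
    dsimp only
    rw [Finset.sum_comm]
    have hx : ∀ x : Fin K → α,
        ∑ i : Fin K, (∏ j, p1 (x j)) * ∑ b, p2 b * (Real.exp (f (x i) b) / D x b)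
          = (∏ j, p1 (x j)) * (K : ℝ) := by
      intro x
      rw [← Finset.mul_sum]
      congr 1
      rw [Finset.sum_comm]
      have hb : ∀ b : β, ∑ i : Fin K, p2 b * (Real.exp (f (x i) b) / D x b)
          = p2 b * K := by
        intro b
        rw [← Finset.mul_sum]
        congr 1
        rw [← Finset.sum_div]
        have hS : 0 < ∑ j : Fin K, Real.exp (f (x j) b) :=
          Finset.sum_pos (fun j _ => Real.exp_pos _) Finset.univ_nonempty
        rw [hDdef]
        field_simp
      rw [Finset.sum_congr rfl fun b _ => hb b, ← Finset.sum_mul, hsum2, one_mul]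
    rw [Finset.sum_congr rfl fun x _ => hx x, ← Finset.sum_mul]
    rw [sum_pi_prod (fun _ a => p1 a)]
    simp [hsum1]
  -- assemble
  have expand : ∑ s : Fin K → α × β, P s * ((1 / (K:ℝ)) * ∑ i : Fin K, L i s)
      = (1 / (K:ℝ)) * ∑ i : Fin K, ∑ s : Fin K → α × β, P s * L i s := by
    calc ∑ s : Fin K → α × β, P s * ((1 / (K:ℝ)) * ∑ i : Fin K, L i s)
        = ∑ s : Fin K → α × β, ∑ i : Fin K, (1 / (K:ℝ)) * (P s * L i s) := by
          apply Finset.sum_congr rfl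
          intro s _
          rw [Finset.mul_sum, Finset.mul_sum]
          apply Finset.sum_congr rfl
          intro i _
          ring
      _ = ∑ i : Fin K, ∑ s : Fin K → α × β, (1 / (K:ℝ)) * (P s * L i s) :=
          Finset.sum_comm
      _ = (1 / (K:ℝ)) * ∑ i : Fin K, ∑ s : Fin K → α × β, P s * L i s := by
          rw [Finset.mul_sum]
          apply Finset.sum_congr rfl
          intro i _
          rw [Finset.mul_sum]
  have goal_eq : ∑ s : Fin K → α × β, (∏ i, p (s i)) *
        ((1 / (K : ℝ)) * ∑ i : Fin K,
          Real.log (Real.exp (f (s i).1 (s i).2) /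
            ((1 / (K : ℝ)) * ∑ j : Fin K, Real.exp (f (s j).1 (s i).2))))
      = ∑ s : Fin K → α × β, P s * ((1 / (K:ℝ)) * ∑ i : Fin K, L i s) := rfl
  rw [goal_eq, expand]
  have hbound : ∑ i : Fin K, ∑ s : Fin K → α × β, P s * L i s
      ≤ K * mutualInfoP p := by
    calc ∑ i : Fin K, ∑ s : Fin K → α × β, P s * L i s
        ≤ ∑ i : Fin K, (mutualInfoP p + (Q i - 1)) :=
          Finset.sum_le_sum fun i _ => per_i i
      _ = K * mutualInfoP p := by
          rw [Finset.sum_add_distrib, Finset.sum_sub_distrib, hQsum]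
          simp only [Finset.sum_const, Finset.card_univ, Fintype.card_fin,
            nsmul_eq_mul, smul_eq_mul, mul_one]
          ring
  calc (1 / (K:ℝ)) * ∑ i : Fin K, ∑ s : Fin K → α × β, P s * L i s
      ≤ (1 / (K:ℝ)) * (K * mutualInfoP p) :=
        mul_le_mul_of_nonneg_left hbound (by positivity)
    _ = mutualInfoP p := by field_simp
end
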